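/- Let R be a principal ideal domain, n ≥ 1, and fix a monomial order on R[x₁,...,xₙ]. Then every ideal I of R[x₁,...,xₙ] has a finite strong Gröbner basis: there exists a finite set Γ ⊆ I \ {0} such that for every nonzero f ∈ I there is g ∈ Γ whose leading monomial divides the leading monomial of f. -/

import Mathlib

open MvPolynomial

variable {R : Type*} [CommRing R] {σ : Type*}

/-- The leading exponent vector (leading term) of a polynomial with respect to a
monomial order: the largest exponent vector with nonzero coefficient. -/
noncomputable def mDegree (m : MonomialOrder σ) (f : MvPolynomial σ R) : σ →₀ ℕ :=
  m.toSyn.symm (f.support.sup fun d => m.toSyn d)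

/-- The leading coefficient of a polynomial with respect to a monomial order. -/
noncomputable def mLeadingCoeff (m : MonomialOrder σ) (f : MvPolynomial σ R) : R :=
  f.coeff (mDegree m f)

/-- `Γ ⊆ I \ {0}` is a strong Gröbner basis of `I` when, for every nonzero `f ∈ I`,
some `g ∈ Γ` has leading monomial `lm(g) = lc(g)·lt(g)` dividing `lm(f)`, i.e. the
leading coefficient of `g` divides that of `f` and the leading exponent vector of `g`
is componentwise `≤` that of `f`. -/
def IsStrongGroebnerBasis (m : MonomialOrder σ) (I : Ideal (MvPolynomial σ R))
    (Γ : Set (MvPolynomial σ R)) : Prop :=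
  Γ ⊆ (I : Set (MvPolynomial σ R)) \ {0} ∧
    ∀ f ∈ I, f ≠ 0 → ∃ g ∈ Γ,
      mLeadingCoeff m g ∣ mLeadingCoeff m f ∧ mDegree m g ≤ mDegree m f

lemma mDegree_mem_support {m : MonomialOrder σ} {f : MvPolynomial σ R} (hf : f ≠ 0) :
    mDegree m f ∈ f.support := by
  obtain ⟨d, hd, hsup⟩ := Finset.exists_mem_eq_sup f.support
    (MvPolynomial.support_nonempty.mpr hf) (fun d => m.toSyn d)
  rw [mDegree, hsup, AddEquiv.symm_apply_apply]
  exact hd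

lemma mLeadingCoeff_ne_zero {m : MonomialOrder σ} {f : MvPolynomial σ R} (hf : f ≠ 0) :
    mLeadingCoeff m f ≠ 0 :=
  MvPolynomial.mem_support_iff.mp (mDegree_mem_support hf)

lemma toSyn_mDegree_eq_sup (m : MonomialOrder σ) (f : MvPolynomial σ R) :
    m.toSyn (mDegree m f) = f.support.sup fun d => m.toSyn d := by
  rw [mDegree, AddEquiv.apply_symm_apply]

lemma le_toSyn_mDegree {m : MonomialOrder σ} {f : MvPolynomial σ R} {d : σ →₀ ℕ}
    (hd : f.coeff d ≠ 0) : m.toSyn d ≤ m.toSyn (mDegree m f) := by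
  rw [toSyn_mDegree_eq_sup]
  exact Finset.le_sup (MvPolynomial.mem_support_iff.mpr hd)

/-- If the coefficient at `e` is nonzero and every nonzero coefficient has `toSyn`-value
at most `toSyn e`, then `e` is the `mDegree`. -/
lemma mDegree_eq_of {m : MonomialOrder σ} {f : MvPolynomial σ R} {e : σ →₀ ℕ}
    (h1 : f.coeff e ≠ 0) (h2 : ∀ d, f.coeff d ≠ 0 → m.toSyn d ≤ m.toSyn e) :
    mDegree m f = e := by
  have h3 : m.toSyn (mDegree m f) = m.toSyn e := by
    apply le_antisymm
    · rw [toSyn_mDegree_eq_sup]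
      exact Finset.sup_le fun d hd => h2 d (MvPolynomial.mem_support_iff.mp hd)
    · exact le_toSyn_mDegree h1
  exact m.toSyn.injective h3

lemma exists_finset_subset_span_eq {R M : Type*} [Semiring R] [AddCommMonoid M] [Module R M]
    [IsNoetherian R M] (S : Set M) :
    ∃ t : Finset M, ↑t ⊆ S ∧ Submodule.span R (t : Set M) = Submodule.span R S := by
  classical
  obtain ⟨t, ht⟩ := (IsNoetherian.noetherian (Submodule.span R S))
  choose! u hu hmem using fun x (hx : x ∈ Submodule.span R S) =>
    Submodule.mem_span_finite_of_mem_span hx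
  refine ⟨t.biUnion u, ?_, ?_⟩
  · intro y hy
    simp only [Finset.coe_biUnion, Set.mem_iUnion, Finset.mem_coe] at hy
    obtain ⟨x, hxt, hyx⟩ := hy
    have hxS : x ∈ Submodule.span R S := ht ▸ Submodule.subset_span hxt
    exact hu x hxS hyx
  · apply le_antisymm
    · apply Submodule.span_le.mpr
      intro y hy
      simp only [Finset.coe_biUnion, Set.mem_iUnion, Finset.mem_coe] at hy
      obtain ⟨x, hxt, hyx⟩ := hy
      have hxS : x ∈ Submodule.span R S := ht ▸ Submodule.subset_span hxt
      exact Submodule.subset_span (hu x hxS hyx)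
    · rw [← ht]
      apply Submodule.span_le.mpr
      intro x hxt
      have hxS : x ∈ Submodule.span R S := ht ▸ Submodule.subset_span hxt
      refine Submodule.span_mono ?_ (hmem x hxS)
      intro y hy
      simp only [Finset.coe_biUnion, Set.mem_iUnion, Finset.mem_coe]
      exact ⟨x, hxt, hy⟩

lemma key_lemma {R : Type*} [CommRing R] [IsDomain R] [IsPrincipalIdealRing R] {σ : Type*}
    (m : MonomialOrder σ) (I : Ideal (MvPolynomial σ R)) (T : Finset (MvPolynomial σ R))
    (hT : ↑T ⊆ (I : Set (MvPolynomial σ R)) \ {0}) :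
    ∃ g ∈ I, ∀ c : R, c ∈ Ideal.span (mLeadingCoeff m '' ↑T) → c ≠ 0 →
      g ≠ 0 ∧ mLeadingCoeff m g ∣ c ∧ mDegree m g ≤ T.sup (mDegree m) := by
  classical
  set dT := T.sup (mDegree m) with hdT
  set J := Ideal.span (mLeadingCoeff m '' (T : Set (MvPolynomial σ R))) with hJ
  set γ := Submodule.IsPrincipal.generator J with hγ
  have hγJ : γ ∈ J := Submodule.IsPrincipal.generator_mem J
  rw [hJ, Set.image_eq_range (mLeadingCoeff m) (T : Set (MvPolynomial σ R))] at hγJ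
  obtain ⟨u, hu⟩ := (Submodule.mem_span_range_iff_exists_fun R).mp hγJ
  set g : MvPolynomial σ R :=
    ∑ i : (T : Set (MvPolynomial σ R)),
      monomial (dT - mDegree m (i : MvPolynomial σ R)) (u i) * (i : MvPolynomial σ R) with hg
  have hgI : g ∈ I := by
    apply Submodule.sum_mem
    intro i _
    exact Ideal.mul_mem_left _ _ (hT i.2).1
  have hdle : ∀ i : (T : Set (MvPolynomial σ R)), mDegree m (i : MvPolynomial σ R) ≤ dT :=
    fun i => Finset.le_sup (by exact_mod_cast i.2)
  have hcoeff : g.coeff dT = γ := by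
    rw [hg, MvPolynomial.coeff_sum]
    rw [← hu]
    apply Finset.sum_congr rfl
    intro i _
    rw [MvPolynomial.coeff_monomial_mul', if_pos tsub_le_self,
      tsub_tsub_cancel_of_le (hdle i), smul_eq_mul]
    rfl
  have hbound : ∀ d, g.coeff d ≠ 0 → m.toSyn d ≤ m.toSyn dT := by
    intro d hd
    rw [hg, MvPolynomial.coeff_sum] at hd
    obtain ⟨i, _, hi⟩ := Finset.exists_ne_zero_of_sum_ne_zero hd
    rw [MvPolynomial.coeff_monomial_mul'] at hi
    by_cases hle : dT - mDegree m (i : MvPolynomial σ R) ≤ d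
    · rw [if_pos hle] at hi
      have h2 : (i : MvPolynomial σ R).coeff (d - (dT - mDegree m (i : MvPolynomial σ R))) ≠ 0 :=
        fun h => hi (by rw [h, mul_zero])
      calc m.toSyn d = m.toSyn ((dT - mDegree m (i : MvPolynomial σ R))
            + (d - (dT - mDegree m (i : MvPolynomial σ R)))) := by
            rw [add_tsub_cancel_of_le hle]
        _ = m.toSyn (dT - mDegree m (i : MvPolynomial σ R))
            + m.toSyn (d - (dT - mDegree m (i : MvPolynomial σ R))) := map_add _ _ _
        _ ≤ m.toSyn (dT - mDegree m (i : MvPolynomial σ R))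
            + m.toSyn (mDegree m (i : MvPolynomial σ R)) := by
            exact add_le_add le_rfl (le_toSyn_mDegree (m := m) h2)
        _ = m.toSyn ((dT - mDegree m (i : MvPolynomial σ R))
            + mDegree m (i : MvPolynomial σ R)) := (map_add _ _ _).symm
        _ = m.toSyn dT := by rw [tsub_add_cancel_of_le (hdle i)]
    · rw [if_neg hle] at hi
      exact absurd rfl hi
  refine ⟨g, hgI, fun c hc hc0 => ?_⟩
  have hγdvd : γ ∣ c := (Submodule.IsPrincipal.mem_iff_generator_dvd J).mp hc
  have hγ0 : γ ≠ 0 := fun h => hc0 (zero_dvd_iff.mp (h ▸ hγdvd))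
  have hgd : mDegree m g = dT := mDegree_eq_of (hcoeff ▸ hγ0) hbound
  have hlc : mLeadingCoeff m g = γ := by rw [mLeadingCoeff, hgd, hcoeff]
  exact ⟨fun h => hγ0 (by rw [← hcoeff, h, MvPolynomial.coeff_zero]),
    hlc ▸ hγdvd, hgd.le⟩

/-- Over a PID `R`, every ideal of `R[x₁,…,xₙ]` (`n ≥ 1`) has a finite strong
Gröbner basis with respect to any monomial order. -/
theorem exists_finite_strong_groebner_basis
    {R : Type*} [CommRing R] [IsDomain R] [IsPrincipalIdealRing R]
    (n : ℕ) (hn : 1 ≤ n) (m : MonomialOrder (Fin n))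
    (I : Ideal (MvPolynomial (Fin n) R)) :
    ∃ Γ : Finset (MvPolynomial (Fin n) R),
      IsStrongGroebnerBasis m I (Γ : Set (MvPolynomial (Fin n) R)) := by
  classical
  set lm : MvPolynomial (Fin n) R → MvPolynomial (Fin n) R :=
    fun f => monomial (mDegree m f) (mLeadingCoeff m f) with hlm
  set S : Set (MvPolynomial (Fin n) R) := lm '' ((I : Set (MvPolynomial (Fin n) R)) \ {0})
    with hS
  obtain ⟨t, htS, htspan⟩ := exists_finset_subset_span_eq (R := MvPolynomial (Fin n) R) S
  have hrepex : ∀ s ∈ t, ∃ f, (f ∈ (I : Set (MvPolynomial (Fin n) R)) \ {0}) ∧ lm f = s :=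
    fun s hs => htS hs
  choose! rep hrepmem hrepeq using hrepex
  set F : Finset (MvPolynomial (Fin n) R) := t.image rep with hF
  have hFsub : (F : Set (MvPolynomial (Fin n) R)) ⊆ (I : Set (MvPolynomial (Fin n) R)) \ {0} := by
    intro g hg
    simp only [hF, Finset.coe_image, Set.mem_image, Finset.mem_coe] at hg
    obtain ⟨s, hs, rfl⟩ := hg
    exact hrepmem s hs
  have hspanF : Submodule.span (MvPolynomial (Fin n) R) (lm '' (F : Set (MvPolynomial (Fin n) R)))
      = Submodule.span (MvPolynomial (Fin n) R) S := by
    apply le_antisymm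
    · apply Submodule.span_le.mpr
      intro y hy
      obtain ⟨g, hg, rfl⟩ := hy
      exact Submodule.subset_span ⟨g, hFsub hg, rfl⟩
    · rw [← htspan]
      apply Submodule.span_le.mpr
      intro s hs
      refine Submodule.subset_span ⟨rep s, ?_, hrepeq s hs⟩
      simp only [hF, Finset.coe_image, Set.mem_image, Finset.mem_coe]
      exact ⟨s, hs, rfl⟩
  choose! gfun hgI hgprop using fun T hT => key_lemma m I T hT
  refine ⟨(F.powerset.image gfun).filter (fun g => g ≠ 0), ?_, ?_⟩
  · intro g hg
    simp only [Finset.coe_filter, Set.mem_setOf_eq, Finset.mem_image,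
      Finset.mem_powerset] at hg
    obtain ⟨⟨T, hTF, rfl⟩, hg0⟩ := hg
    have hTsub : (T : Set (MvPolynomial (Fin n) R)) ⊆ (I : Set (MvPolynomial (Fin n) R)) \ {0} :=
      Set.Subset.trans (Finset.coe_subset.mpr hTF) hFsub
    exact ⟨hgI T hTsub, hg0⟩
  · intro f hfI hf0
    set d := mDegree m f with hd
    set c := mLeadingCoeff m f with hc
    have hc0 : c ≠ 0 := mLeadingCoeff_ne_zero hf0
    set T : Finset (MvPolynomial (Fin n) R) := F.filter (fun g => mDegree m g ≤ d) with hT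
    have hTsub : (T : Set (MvPolynomial (Fin n) R)) ⊆ (I : Set (MvPolynomial (Fin n) R)) \ {0} :=
      Set.Subset.trans (Finset.coe_subset.mpr (Finset.filter_subset _ _)) hFsub
    -- c belongs to the ideal generated by leading coefficients of elements of T
    have hcmem : c ∈ Ideal.span (mLeadingCoeff m '' (T : Set (MvPolynomial (Fin n) R))) := by
      have h1 : (monomial d c : MvPolynomial (Fin n) R)
          ∈ Submodule.span (MvPolynomial (Fin n) R) (lm '' (F : Set (MvPolynomial (Fin n) R))) := by
        rw [hspanF]
        exact Submodule.subset_span ⟨f, ⟨hfI, hf0⟩, rfl⟩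
      rw [← Finset.coe_image] at h1
      obtain ⟨p, -, hp⟩ := Submodule.mem_span_finset.mp h1
      have hcoe : c = ∑ s ∈ F.image lm, ((p s * s).coeff d) := by
        rw [← MvPolynomial.coeff_sum]
        have : ∑ s ∈ F.image lm, p s * s = monomial d c := by
          rw [← hp]; apply Finset.sum_congr rfl; intro s _; rw [smul_eq_mul]
        rw [this, MvPolynomial.coeff_monomial, if_pos rfl]
      rw [hcoe]
      apply Ideal.sum_mem
      intro s hs
      obtain ⟨g, hgF, rfl⟩ := Finset.mem_image.mp hs
      rw [hlm]
      simp only []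
      rw [MvPolynomial.coeff_mul_monomial']
      by_cases hle : mDegree m g ≤ d
      · rw [if_pos hle]
        exact Ideal.mul_mem_left _ _ (Ideal.subset_span
          ⟨g, by simp [hT, Finset.mem_coe, Finset.mem_filter, hgF, hle], rfl⟩)
      · rw [if_neg hle]; exact Ideal.zero_mem _
    obtain ⟨hg0, hdvd, hdle⟩ := hgprop T hTsub c hcmem hc0
    refine ⟨gfun T, ?_, hdvd, le_trans hdle ?_⟩
    · simp only [Finset.coe_filter, Set.mem_setOf_eq, Finset.mem_image, Finset.mem_powerset]
      exact ⟨⟨T, Finset.filter_subset _ _, rfl⟩, hg0⟩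
    · exact Finset.sup_le fun g hg => (Finset.mem_filter.mp hg).2
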